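/- Let k be a commutative ring, E₀ and E₁ two k-modules, and m ∈ ℕ. For 0 ≤ i ≤ m, regard Σ_{m-i} × Σ_i as a subgroup of Σ_m = Perm (Fin m) via the canonical equivalence Fin (m-i) ⊕ Fin i ≃ Fin m, and let it act on E₀^{⊗(m-i)} ⊗ E₁^{⊗ i} with each factor permuting the corresponding tensor factors. Then there is an isomorphism of k-linear Σ_m-representations ⨂_{j ∈ Fin m} (E₀ ⊕ E₁) ≅ ⨁_{i=0}^{m} Ind_{Σ_{m-i} × Σ_i}^{Σ_m} (E₀^{⊗(m-i)} ⊗ E₁^{⊗ i}), where Σ_m acts on the left-hand side by permuting the tensor factors. -/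

import Mathlib

open Equiv TensorProduct PiTensorProduct DirectSum

/-- The action of `Perm I` on `I → G` by `(σ • g) i = g (σ⁻¹ i)`. -/
def permAut (G : Type*) [Group G] (I : Type*) : Equiv.Perm I →* MulAut (I → G) where
  toFun σ :=
    { toFun := fun g => g ∘ σ.symm
      invFun := fun g => g ∘ σ
      left_inv := fun g => by funext i; simp
      right_inv := fun g => by funext i; simp
      map_mul' := fun g h => rfl }
  map_one' := by ext g i; rfl
  map_mul' := fun σ τ => by ext g i; rfl

/-- The wreath product `G ≀ Σ(I)`. -/
abbrev Wreath (G : Type*) [Group G] (I : Type*) :=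
  (I → G) ⋊[permAut G I] Equiv.Perm I

/-- The wreath tensor-power representation of `G ≀ Σ(I)` on `⨂ (i : I), V`:
the base `I → G` acts factorwise and `Perm I` permutes the tensor factors. -/
noncomputable def wreathRep (R : Type*) [CommRing R] {G : Type*} [Group G] (I : Type*)
    {V : Type*} [AddCommGroup V] [Module R V] (ρ : Representation R G V) :
    Representation R (Wreath G I) (⨂[R] _i : I, V) where
  toFun w :=
    (PiTensorProduct.map fun i => ρ (w.left i)).comp
      (PiTensorProduct.reindex R (fun _ : I => V) w.right).toLinearMap
  map_one' := by
    ext v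
    simp [Equiv.Perm.one_def]
  map_mul' := fun w₁ w₂ => by
    ext v
    simp [permAut, SemidirectProduct.mul_left, SemidirectProduct.mul_right,
      Equiv.Perm.mul_apply, Equiv.Perm.inv_def, Equiv.Perm.mul_def]

section Ind

variable (k : Type*) [CommRing k] {H G : Type*} [Group H] [Group G] (f : H →* G)
  (V : Type*) [AddCommGroup V] [Module k V] (ρ : Representation k H V)

/-- The submodule of relations defining the balanced tensor product
`MonoidAlgebra k G ⊗[MonoidAlgebra k H] V`. -/
noncomputable def indRel : Submodule k (MonoidAlgebra k G ⊗[k] V) :=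
  Submodule.span k {x | ∃ (a : MonoidAlgebra k G) (h : H) (v : V),
    x = (a * MonoidAlgebra.of k G (f h)) ⊗ₜ[k] v - a ⊗ₜ[k] (ρ h v)}

/-- The induced representation `Ind_H^G V = MonoidAlgebra k G ⊗_{MonoidAlgebra k H} V`,
realized as the quotient of `MonoidAlgebra k G ⊗[k] V` by the balancing relations. -/
abbrev Ind : Type _ := (MonoidAlgebra k G ⊗[k] V) ⧸ indRel k f V ρ

theorem indRel_le_comap (g : G) :
    indRel k f V ρ ≤ (indRel k f V ρ).comap
      (LinearMap.rTensor V (LinearMap.mulLeft k (MonoidAlgebra.of k G g))) := by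
  rw [indRel, Submodule.span_le]
  rintro x ⟨a, h, v, rfl⟩
  simp only [SetLike.mem_coe, Submodule.mem_comap, map_sub, LinearMap.rTensor_tmul,
    LinearMap.mulLeft_apply]
  rw [← mul_assoc]
  exact Submodule.subset_span ⟨MonoidAlgebra.of k G g * a, h, v, rfl⟩

/-- The `G`-action on `Ind_H^G V` by left multiplication on the first factor. -/
noncomputable def indRep : Representation k G (Ind k f V ρ) where
  toFun g := Submodule.mapQ _ _
      (LinearMap.rTensor V (LinearMap.mulLeft k (MonoidAlgebra.of k G g)))
      (indRel_le_comap k f V ρ g)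
  map_one' := by
    apply LinearMap.ext
    intro x
    induction x using Submodule.Quotient.induction_on with
    | _ y =>
      simp [Submodule.mapQ_apply, ← MonoidAlgebra.one_def, LinearMap.mulLeft_one]
  map_mul' := fun g₁ g₂ => by
    apply LinearMap.ext
    intro x
    induction x using Submodule.Quotient.induction_on with
    | _ y =>
      simp only [Submodule.mapQ_apply, _root_.map_mul, LinearMap.mulLeft_mul,
        LinearMap.rTensor_comp, LinearMap.comp_apply, Module.End.mul_apply]

end Ind

/-- The embedding `Perm (Fin a) × Perm (Fin b) → Perm (Fin N)` induced by an equivalence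
`e : Fin a ⊕ Fin b ≃ Fin N`. -/
def permPairHom {a b N : ℕ} (e : Fin a ⊕ Fin b ≃ Fin N) :
    Equiv.Perm (Fin a) × Equiv.Perm (Fin b) →* Equiv.Perm (Fin N) where
  toFun p := (e.symm.trans ((p.1.sumCongr p.2).trans e) : Equiv.Perm (Fin N))
  map_one' := by
    ext x
    rcases h : e.symm x with u | u <;> simp [h] <;> simp [← h]
  map_mul' := fun p q => by
    ext x
    rcases h : e.symm x with u | u <;> simp [h, Equiv.Perm.mul_apply]

/-- The representation of `Perm (Fin a) × Perm (Fin b)` on `E₀^{⊗ a} ⊗ E₁^{⊗ b}` in which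
each factor permutes the corresponding tensor factors. -/
noncomputable def pairPermRep (R : Type*) [CommRing R] (a b : ℕ) (E₀ E₁ : Type*)
    [AddCommGroup E₀] [Module R E₀] [AddCommGroup E₁] [Module R E₁] :
    Representation R (Equiv.Perm (Fin a) × Equiv.Perm (Fin b))
      ((⨂[R] _x : Fin a, E₀) ⊗[R] (⨂[R] _x : Fin b, E₁)) where
  toFun p :=
    TensorProduct.map (PiTensorProduct.reindex R (fun _ : Fin a => E₀) p.1).toLinearMap
      (PiTensorProduct.reindex R (fun _ : Fin b => E₁) p.2).toLinearMap
  map_one' := by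
    ext v w
    simp [Equiv.Perm.one_def]
  map_mul' := fun p q => by
    ext v w
    simp [Equiv.Perm.mul_def, Module.End.mul_apply]

variable (k : Type*) [CommRing k] (E₀ E₁ : Type*) [AddCommGroup E₀] [Module k E₀]
  [AddCommGroup E₁] [Module k E₁] (m : ℕ)

/-- The `i`-th summand `Ind_{Σ_{m-i} × Σ_i}^{Σ_m} (E₀^{⊗ (m-i)} ⊗ E₁^{⊗ i})`. -/
noncomputable abbrev IndSummand (i : Fin (m + 1)) : Type _ :=
  Ind k (permPairHom (finSumFinEquiv.trans
      (finCongr (Nat.sub_add_cancel (Nat.lt_succ_iff.mp i.isLt)))))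
    ((⨂[k] _x : Fin (m - (i : ℕ)), E₀) ⊗[k] (⨂[k] _x : Fin ((i : ℕ)), E₁))
    (pairPermRep k (m - (i : ℕ)) (i : ℕ) E₀ E₁)

/-- The action of `σ ∈ Σ_m` on the direct sum of the induced representations,
acting on each summand through `indRep`. -/
noncomputable def sumIndAction (σ : Equiv.Perm (Fin m)) :
    (⨁ i : Fin (m + 1), IndSummand k E₀ E₁ m i) →ₗ[k]
      ⨁ i : Fin (m + 1), IndSummand k E₀ E₁ m i :=
  DirectSum.toModule k _ _ fun i =>
    (DirectSum.lof k (Fin (m + 1)) (IndSummand k E₀ E₁ m) i).comp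
      (indRep k (permPairHom (finSumFinEquiv.trans
          (finCongr (Nat.sub_add_cancel (Nat.lt_succ_iff.mp i.isLt)))))
        ((⨂[k] _x : Fin (m - (i : ℕ)), E₀) ⊗[k] (⨂[k] _x : Fin ((i : ℕ)), E₁))
        (pairPermRep k (m - (i : ℕ)) (i : ℕ) E₀ E₁) σ)


section Aux

open MonoidAlgebra

/-- Local notation for the big tensor power. -/
local notation "L" => ⨂[k] _j : Fin m, (E₀ × E₁)

/-- The canonical equivalence used in `IndSummand`. -/
abbrev canE (i : Fin (m + 1)) : Fin (m - (i : ℕ)) ⊕ Fin (i : ℕ) ≃ Fin m :=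
  finSumFinEquiv.trans (finCongr (Nat.sub_add_cancel (Nat.lt_succ_iff.mp i.isLt)))

variable {m} in
/-- The splitting of `Fin m` according to a finset `S`. -/
def splitEquiv (S : Finset (Fin m)) {a b : ℕ} (ha : Sᶜ.card = a) (hb : S.card = b) :
    Fin a ⊕ Fin b ≃ Fin m :=
  (Equiv.sumCongr ((Sᶜ.orderIsoOfFin ha).toEquiv.trans
      (Equiv.subtypeEquivRight (fun x => Finset.mem_compl))) (S.orderIsoOfFin hb).toEquiv).trans
    ((Equiv.sumComm _ _).trans (Equiv.sumCompl (· ∈ S)))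

variable {m} in
theorem splitEquiv_inl_not_mem (S : Finset (Fin m)) {a b : ℕ} (ha : Sᶜ.card = a)
    (hb : S.card = b) (x : Fin a) : splitEquiv S ha hb (Sum.inl x) ∉ S := by
  simpa [splitEquiv] using Finset.mem_compl.mp ((Sᶜ.orderIsoOfFin ha) x).2

variable {m} in
theorem splitEquiv_inr_mem (S : Finset (Fin m)) {a b : ℕ} (ha : Sᶜ.card = a)
    (hb : S.card = b) (y : Fin b) : splitEquiv S ha hb (Sum.inr y) ∈ S := by
  simpa [splitEquiv] using (S.orderIsoOfFin hb y).2

variable {m} in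
theorem card_compl_eq {i : Fin (m + 1)} {S : Finset (Fin m)} (hS : S.card = (i : ℕ)) :
    Sᶜ.card = m - (i : ℕ) := by
  simp [Finset.card_compl, hS]

variable {m} in
/-- The coset representative permutation attached to `S`. -/
def sigmaS (i : Fin (m + 1)) (S : Finset (Fin m)) (hS : S.card = (i : ℕ)) :
    Equiv.Perm (Fin m) :=
  (canE m i).symm.trans (splitEquiv S (card_compl_eq hS) hS)

/-- The inclusion of the `i`-th summand's module into the big tensor power. -/
noncomputable def inclV (i : Fin (m + 1)) :
    ((⨂[k] _x : Fin (m - (i : ℕ)), E₀) ⊗[k] (⨂[k] _x : Fin ((i : ℕ)), E₁)) →ₗ[k] L :=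
  (PiTensorProduct.reindex k (fun _ => E₀ × E₁) (canE m i)).toLinearMap ∘ₗ
    (PiTensorProduct.tmulEquiv k (E₀ × E₁)).toLinearMap ∘ₗ
      TensorProduct.map (PiTensorProduct.map fun _ => LinearMap.inl k E₀ E₁)
        (PiTensorProduct.map fun _ => LinearMap.inr k E₀ E₁)

/-- The action of a permutation on the big tensor power. -/
noncomputable def Lact (σ : Equiv.Perm (Fin m)) : L →ₗ[k] L :=
  (PiTensorProduct.reindex k (fun _ => E₀ × E₁) σ).toLinearMap

theorem inclV_tprod (i : Fin (m + 1)) (u : Fin (m - (i : ℕ)) → E₀) (t : Fin (i : ℕ) → E₁) :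
    inclV k E₀ E₁ m i ((tprod k u) ⊗ₜ[k] (tprod k t)) =
      tprod k (fun j => Sum.elim (fun x => ((u x, 0) : E₀ × E₁))
        (fun y => ((0, t y) : E₀ × E₁)) ((canE m i).symm j)) := by
  simp only [inclV, LinearMap.coe_comp, LinearEquiv.coe_coe, Function.comp_apply,
    TensorProduct.map_tmul, PiTensorProduct.map_tprod, PiTensorProduct.tmulEquiv_apply,
    PiTensorProduct.reindex_tprod]
  exact congrArg (PiTensorProduct.tprod k) (funext fun j => by
    rcases (canE m i).symm j with x | y <;> rfl)

theorem Lact_tprod (σ : Equiv.Perm (Fin m)) (v : Fin m → E₀ × E₁) :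
    Lact k E₀ E₁ m σ (tprod k v) = tprod k (fun j => v (σ⁻¹ j)) := by
  simp [Lact]

theorem indRep_mk {k : Type*} [CommRing k] {H G : Type*} [Group H] [Group G] (f : H →* G)
    (V : Type*) [AddCommGroup V] [Module k V] (ρ : Representation k H V) (g : G)
    (z : MonoidAlgebra k G ⊗[k] V) :
    indRep k f V ρ g (Submodule.Quotient.mk z) =
      Submodule.Quotient.mk
        (LinearMap.rTensor V (LinearMap.mulLeft k (MonoidAlgebra.of k G g)) z) := rfl

theorem Lact_mul (σ τ : Equiv.Perm (Fin m)) (x : L) :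
    Lact k E₀ E₁ m (σ * τ) x = Lact k E₀ E₁ m σ (Lact k E₀ E₁ m τ x) := by
  simp only [Lact, LinearEquiv.coe_coe, Equiv.Perm.mul_def]
  exact (PiTensorProduct.reindex_reindex τ σ x).symm

theorem inclV_equivariant (i : Fin (m + 1))
    (h : Equiv.Perm (Fin (m - (i : ℕ))) × Equiv.Perm (Fin (i : ℕ)))
    (w : (⨂[k] _x : Fin (m - (i : ℕ)), E₀) ⊗[k] (⨂[k] _x : Fin ((i : ℕ)), E₁)) :
    Lact k E₀ E₁ m (permPairHom (canE m i) h) (inclV k E₀ E₁ m i w) =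
      inclV k E₀ E₁ m i (pairPermRep k (m - (i : ℕ)) (i : ℕ) E₀ E₁ h w) := by
  have := LinearMap.congr_fun (?_ :
      (Lact k E₀ E₁ m (permPairHom (canE m i) h)) ∘ₗ inclV k E₀ E₁ m i =
      inclV k E₀ E₁ m i ∘ₗ (pairPermRep k (m - (i : ℕ)) (i : ℕ) E₀ E₁ h : _ →ₗ[k] _)) w
  · simpa using this
  ext u t
  simp only [LinearMap.compMultilinearMap_apply, AlgebraTensorModule.curry_apply,
    TensorProduct.curry_apply, LinearMap.coe_restrictScalars, LinearMap.coe_comp,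
    Function.comp_apply]
  rw [inclV_tprod, Lact_tprod]
  have hρ : pairPermRep k (m - (i : ℕ)) (i : ℕ) E₀ E₁ h
      ((PiTensorProduct.tprod k) u ⊗ₜ[k] (PiTensorProduct.tprod k) t) =
      (PiTensorProduct.tprod k) (fun x => u (h.1.symm x)) ⊗ₜ[k]
        (PiTensorProduct.tprod k) (fun y => t (h.2.symm y)) := by
    simp [pairPermRep]
  rw [hρ, inclV_tprod]
  refine congrArg (PiTensorProduct.tprod k) (funext fun j => ?_)
  have hinv : ∀ j : Fin m, (canE m i).symm ((permPairHom (canE m i) h)⁻¹ j) =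
      (Equiv.sumCongr h.1.symm h.2.symm) ((canE m i).symm j) := by
    intro j
    simp [permPairHom, Equiv.Perm.inv_def, Equiv.sumCongr_symm]
  rw [hinv]
  rcases (canE m i).symm j with x | y <;> rfl

/-- The balanced product map `kG ⊗ V → L`, `single g c ⊗ w ↦ c • g • incl w`. -/
noncomputable def psi (i : Fin (m + 1)) :
    MonoidAlgebra k (Equiv.Perm (Fin m)) ⊗[k]
      ((⨂[k] _x : Fin (m - (i : ℕ)), E₀) ⊗[k] (⨂[k] _x : Fin ((i : ℕ)), E₁)) →ₗ[k] L :=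
  TensorProduct.lift ((Finsupp.lsum k fun g =>
    LinearMap.toSpanSingleton k _ (Lact k E₀ E₁ m g ∘ₗ inclV k E₀ E₁ m i)) ∘ₗ
      (MonoidAlgebra.coeffLinearEquiv k).toLinearMap)

theorem psi_single (i : Fin (m + 1)) (g : Equiv.Perm (Fin m)) (c : k)
    (w : (⨂[k] _x : Fin (m - (i : ℕ)), E₀) ⊗[k] (⨂[k] _x : Fin ((i : ℕ)), E₁)) :
    psi k E₀ E₁ m i (MonoidAlgebra.single g c ⊗ₜ[k] w) =
      c • Lact k E₀ E₁ m g (inclV k E₀ E₁ m i w) := by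
  simp only [psi, TensorProduct.lift.tmul, LinearMap.coe_comp, Function.comp_apply,
    LinearEquiv.coe_coe, MonoidAlgebra.coeffLinearEquiv_apply, MonoidAlgebra.coeff_single]
  erw [Finsupp.lsum_single]
  simp [LinearMap.toSpanSingleton_apply]

theorem psi_rel (i : Fin (m + 1)) :
    indRel k (permPairHom (canE m i)) _ (pairPermRep k (m - (i : ℕ)) (i : ℕ) E₀ E₁) ≤
      LinearMap.ker (psi k E₀ E₁ m i) := by
  rw [indRel, Submodule.span_le]
  rintro x ⟨a, h, v, rfl⟩
  simp only [SetLike.mem_coe, LinearMap.mem_ker, map_sub, sub_eq_zero]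
  induction a using MonoidAlgebra.induction_linear with
  | zero => simp
  | add f g hf hg =>
      rw [add_mul]
      simp only [TensorProduct.add_tmul, map_add, hf, hg]
  | single g c =>
      have : (MonoidAlgebra.single g c : MonoidAlgebra k (Equiv.Perm (Fin m))) *
          MonoidAlgebra.of k _ (permPairHom (canE m i) h) =
          MonoidAlgebra.single (g * permPairHom (canE m i) h) c := by
        simp [MonoidAlgebra.of_apply, MonoidAlgebra.single_mul_single]
      rw [this, psi_single, psi_single, Lact_mul, inclV_equivariant]

/-- The map from the induced representation to the big tensor power. -/
noncomputable def Psi (i : Fin (m + 1)) : IndSummand k E₀ E₁ m i →ₗ[k] L :=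
  Submodule.liftQ _ (psi k E₀ E₁ m i) (psi_rel k E₀ E₁ m i)

noncomputable def PsiTot : (⨁ i : Fin (m + 1), IndSummand k E₀ E₁ m i) →ₗ[k] L :=
  DirectSum.toModule k _ _ (Psi k E₀ E₁ m)

theorem PsiTot_lof (i : Fin (m + 1)) (x : IndSummand k E₀ E₁ m i) :
    PsiTot k E₀ E₁ m (DirectSum.lof k (Fin (m + 1)) (IndSummand k E₀ E₁ m) i x) =
      Psi k E₀ E₁ m i x :=
  DirectSum.toModule_lof k i x

theorem PsiTot_equivariant (σ : Equiv.Perm (Fin m))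
    (x : ⨁ i : Fin (m + 1), IndSummand k E₀ E₁ m i) :
    PsiTot k E₀ E₁ m (sumIndAction k E₀ E₁ m σ x) = Lact k E₀ E₁ m σ (PsiTot k E₀ E₁ m x) := by
  have : PsiTot k E₀ E₁ m ∘ₗ sumIndAction k E₀ E₁ m σ =
      Lact k E₀ E₁ m σ ∘ₗ PsiTot k E₀ E₁ m := by
    refine DirectSum.linearMap_ext k fun i => ?_
    refine LinearMap.ext fun y => ?_
    simp only [LinearMap.coe_comp, Function.comp_apply]
    have h1 : sumIndAction k E₀ E₁ m σ (DirectSum.lof k _ (IndSummand k E₀ E₁ m) i y) =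
        DirectSum.lof k _ (IndSummand k E₀ E₁ m) i
          (indRep k (permPairHom (canE m i)) _ (pairPermRep k (m - (i : ℕ)) (i : ℕ) E₀ E₁) σ y) :=
      DirectSum.toModule_lof k i y
    rw [h1, PsiTot_lof, PsiTot_lof]
    have key : psi k E₀ E₁ m i ∘ₗ LinearMap.rTensor _
        (LinearMap.mulLeft k (MonoidAlgebra.of k _ σ)) =
        Lact k E₀ E₁ m σ ∘ₗ psi k E₀ E₁ m i := by
      ext g w t
      simp only [LinearMap.compMultilinearMap_apply, TensorProduct.AlgebraTensorModule.curry_apply,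
        TensorProduct.curry_apply, LinearMap.coe_restrictScalars, LinearMap.coe_comp,
        Function.comp_apply, MonoidAlgebra.lsingle_apply, LinearMap.rTensor_tmul,
        LinearMap.mulLeft_apply]
      have hmul : (MonoidAlgebra.of k (Equiv.Perm (Fin m)) σ) * MonoidAlgebra.single g (1 : k) =
          MonoidAlgebra.single (σ * g) (1 : k) := by
        simp [MonoidAlgebra.of_apply, MonoidAlgebra.single_mul_single]
      rw [hmul, psi_single, psi_single, Lact_mul]
      simp
    induction y using Submodule.Quotient.induction_on with
    | _ z =>
      rw [indRep_mk]
      show psi k E₀ E₁ m i _ = Lact k E₀ E₁ m σ (psi k E₀ E₁ m i z)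
      exact LinearMap.congr_fun key z
  exact LinearMap.congr_fun this x

variable {m} in
theorem card_le (S : Finset (Fin m)) : S.card < m + 1 :=
  Nat.lt_succ_of_le ((Finset.card_le_univ S).trans_eq (by simp))

theorem Psi_mk (i : Fin (m + 1)) (z : MonoidAlgebra k (Equiv.Perm (Fin m)) ⊗[k]
    ((⨂[k] _x : Fin (m - (i : ℕ)), E₀) ⊗[k] (⨂[k] _x : Fin ((i : ℕ)), E₁))) :
    Psi k E₀ E₁ m i (Submodule.Quotient.mk z) = psi k E₀ E₁ m i z := rfl


/-- The summand inclusion used by the decomposition map. -/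
noncomputable def toSummand (i : Fin (m + 1)) (S : Finset (Fin m)) (hS : S.card = (i : ℕ)) :
    ((⨂[k] _x : Fin (m - (i : ℕ)), E₀) ⊗[k] (⨂[k] _x : Fin ((i : ℕ)), E₁)) →ₗ[k]
      (⨁ j : Fin (m + 1), IndSummand k E₀ E₁ m j) :=
  (DirectSum.lof k (Fin (m + 1)) (IndSummand k E₀ E₁ m) i).comp
    ((Submodule.mkQ _ :
        MonoidAlgebra k (Equiv.Perm (Fin m)) ⊗[k]
          ((⨂[k] _x : Fin (m - (i : ℕ)), E₀) ⊗[k] (⨂[k] _x : Fin ((i : ℕ)), E₁)) →ₗ[k]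
          IndSummand k E₀ E₁ m i).comp
      (TensorProduct.mk k (MonoidAlgebra k (Equiv.Perm (Fin m)))
        ((⨂[k] _x : Fin (m - (i : ℕ)), E₀) ⊗[k] (⨂[k] _x : Fin ((i : ℕ)), E₁))
        (MonoidAlgebra.single (sigmaS i S hS) (1 : k))))

/-- The `S`-indexed multilinear term of the decomposition map. -/
noncomputable def termMl (i : Fin (m + 1)) (S : Finset (Fin m)) (hS : S.card = (i : ℕ)) :
    MultilinearMap k (fun _ : Fin m => E₀ × E₁)
      (⨁ j : Fin (m + 1), IndSummand k E₀ E₁ m j) :=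
  (toSummand k E₀ E₁ m i S hS).compMultilinearMap
    ((((PiTensorProduct.tprod k).compLinearMap (fun _ => LinearMap.fst k E₀ E₁)).domCoprod
        ((PiTensorProduct.tprod k).compLinearMap (fun _ => LinearMap.snd k E₀ E₁))).domDomCongr
      (splitEquiv S (card_compl_eq hS) hS))

theorem termMl_apply (i : Fin (m + 1)) (S : Finset (Fin m)) (hS : S.card = (i : ℕ))
    (v : Fin m → E₀ × E₁) :
    termMl k E₀ E₁ m i S hS v =
      DirectSum.lof k (Fin (m + 1)) (IndSummand k E₀ E₁ m) i
        (Submodule.Quotient.mk (MonoidAlgebra.single (sigmaS i S hS) (1 : k) ⊗ₜ[k]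
          ((PiTensorProduct.tprod k
              (fun x => (v (splitEquiv S (card_compl_eq hS) hS (Sum.inl x))).1)) ⊗ₜ[k]
            (PiTensorProduct.tprod k
              (fun y => (v (splitEquiv S (card_compl_eq hS) hS (Sum.inr y))).2))))) := rfl

theorem termMl_congr (i : Fin (m + 1)) (S : Finset (Fin m)) (hS : S.card = (i : ℕ)) :
    termMl k E₀ E₁ m ⟨S.card, card_le S⟩ S rfl = termMl k E₀ E₁ m i S hS := by
  rcases i with ⟨iv, hiv⟩
  have hS' : S.card = iv := hS
  subst hS'
  rfl

/-- The total decomposition multilinear map. -/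
noncomputable def mu : MultilinearMap k (fun _ : Fin m => E₀ × E₁)
    (⨁ j : Fin (m + 1), IndSummand k E₀ E₁ m j) :=
  ∑ S : Finset (Fin m), termMl k E₀ E₁ m ⟨S.card, card_le S⟩ S rfl

/-- The decomposition map from the big tensor power to the direct sum. -/
noncomputable def Phi0 : L →ₗ[k] ⨁ j : Fin (m + 1), IndSummand k E₀ E₁ m j :=
  PiTensorProduct.lift (mu k E₀ E₁ m)

theorem PsiTot_termMl (i : Fin (m + 1)) (S : Finset (Fin m)) (hS : S.card = (i : ℕ))
    (v : Fin m → E₀ × E₁) :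
    PsiTot k E₀ E₁ m (termMl k E₀ E₁ m i S hS v) =
      PiTensorProduct.tprod k
        (S.piecewise (fun j => (((0 : E₀), (v j).2) : E₀ × E₁))
          (fun j => (((v j).1, (0 : E₁)) : E₀ × E₁))) := by
  rw [termMl_apply, PsiTot_lof, Psi_mk]
  rw [psi_single, one_smul, inclV_tprod, Lact_tprod]
  refine congrArg (PiTensorProduct.tprod k) (funext fun j => ?_)
  have hsig : ∀ j : Fin m, (canE m i).symm ((sigmaS i S hS)⁻¹ j) =
      (splitEquiv S (card_compl_eq hS) hS).symm j := fun j => by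
    simp [sigmaS, Equiv.Perm.inv_def]
  rw [hsig]
  rcases hj : (splitEquiv S (card_compl_eq hS) hS).symm j with x | y
  · have hjx : j = splitEquiv S (card_compl_eq hS) hS (Sum.inl x) :=
      (Equiv.symm_apply_eq _).mp hj
    have hnot : j ∉ S := hjx ▸ splitEquiv_inl_not_mem S _ _ x
    rw [Finset.piecewise_eq_of_notMem _ _ _ hnot]
    simp only [Sum.elim_inl]
    rw [← hjx]
  · have hjy : j = splitEquiv S (card_compl_eq hS) hS (Sum.inr y) :=
      (Equiv.symm_apply_eq _).mp hj
    have hmem : j ∈ S := hjy ▸ splitEquiv_inr_mem S _ _ y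
    rw [Finset.piecewise_eq_of_mem _ _ _ hmem]
    simp only [Sum.elim_inr]
    rw [← hjy]

theorem PsiTot_Phi0 : PsiTot k E₀ E₁ m ∘ₗ Phi0 k E₀ E₁ m = LinearMap.id := by
  ext v
  simp only [LinearMap.compMultilinearMap_apply, LinearMap.coe_comp, Function.comp_apply,
    Phi0, PiTensorProduct.lift.tprod, LinearMap.id_coe, id_eq]
  rw [mu, MultilinearMap.sum_apply, map_sum]
  rw [Finset.sum_congr rfl fun S _ => PsiTot_termMl k E₀ E₁ m ⟨S.card, card_le S⟩ S rfl v]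
  rw [← MultilinearMap.map_add_univ (PiTensorProduct.tprod k)
    (fun j => (((0 : E₀), (v j).2) : E₀ × E₁)) (fun j => (((v j).1, (0 : E₁)) : E₀ × E₁))]
  exact congrArg (PiTensorProduct.tprod k) (funext fun j => by simp [Prod.ext_iff])

variable {m} in
theorem splitEquiv_symm_isLeft {S : Finset (Fin m)} {a b : ℕ} (ha : Sᶜ.card = a)
    (hb : S.card = b) {j : Fin m} (h : j ∉ S) : ((splitEquiv S ha hb).symm j).isLeft := by
  rcases hj : (splitEquiv S ha hb).symm j with x | y
  · rfl
  · exact absurd (by rw [(Equiv.symm_apply_eq _).mp hj]; exact splitEquiv_inr_mem S ha hb y) h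

variable {m} in
theorem splitEquiv_symm_isRight {S : Finset (Fin m)} {a b : ℕ} (ha : Sᶜ.card = a)
    (hb : S.card = b) {j : Fin m} (h : j ∈ S) : ((splitEquiv S ha hb).symm j).isRight := by
  rcases hj : (splitEquiv S ha hb).symm j with x | y
  · exact absurd h (by rw [(Equiv.symm_apply_eq _).mp hj]; exact splitEquiv_inl_not_mem S ha hb x)
  · rfl

variable {m} in
/-- The pattern finset of a permutation `g`. -/
def Sg (i : Fin (m + 1)) (g : Equiv.Perm (Fin m)) : Finset (Fin m) :=
  Finset.univ.filter (fun j => ((canE m i).symm (g⁻¹ j)).isRight)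

variable {m} in
theorem mem_Sg {i : Fin (m + 1)} {g : Equiv.Perm (Fin m)} {j : Fin m} :
    j ∈ Sg i g ↔ ((canE m i).symm (g⁻¹ j)).isRight := by
  simp [Sg]

variable {m} in
theorem Sg_card (i : Fin (m + 1)) (g : Equiv.Perm (Fin m)) : (Sg i g).card = (i : ℕ) := by
  have himg : Sg i g =
      Finset.image (fun y : Fin (i : ℕ) => g (canE m i (Sum.inr y))) Finset.univ := by
    ext j
    simp only [mem_Sg, Finset.mem_image, Finset.mem_univ, true_and]
    constructor
    · intro hr
      rcases hy : (canE m i).symm (g⁻¹ j) with x | y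
      · rw [hy] at hr; exact absurd hr (by simp)
      · exact ⟨y, by rw [← (Equiv.symm_apply_eq _).mp hy, ← Equiv.Perm.mul_apply, mul_inv_cancel, Equiv.Perm.one_apply]⟩
    · rintro ⟨y, rfl⟩
      rw [← Equiv.Perm.mul_apply, inv_mul_cancel, Equiv.Perm.one_apply, Equiv.symm_apply_apply]
      rfl
  rw [himg, Finset.card_image_of_injective _
    (fun y₁ y₂ h => Sum.inr_injective ((canE m i).injective (g.injective h))), Finset.card_univ,
    Fintype.card_fin]

variable {m} in
theorem sigmaS_inv_apply (i : Fin (m + 1)) (S : Finset (Fin m)) (hS : S.card = (i : ℕ))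
    (p : Fin (m - (i : ℕ)) ⊕ Fin (i : ℕ)) :
    (sigmaS i S hS)⁻¹ (splitEquiv S (card_compl_eq hS) hS p) = canE m i p := by
  simp [sigmaS, Equiv.Perm.inv_def]

variable {m} in
theorem exists_decomp (i : Fin (m + 1)) (g : Equiv.Perm (Fin m)) :
    ∃ h : Equiv.Perm (Fin (m - (i : ℕ))) × Equiv.Perm (Fin (i : ℕ)),
      g = sigmaS i (Sg i g) (Sg_card i g) * permPairHom (canE m i) h := by
  set σ := sigmaS i (Sg i g) (Sg_card i g) with hσ
  set τ := σ⁻¹ * g with hτ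
  have hσinv : ∀ j, σ⁻¹ j = canE m i ((splitEquiv (Sg i g) (card_compl_eq (Sg_card i g))
      (Sg_card i g)).symm j) := by
    intro j
    simp [hσ, sigmaS, Equiv.Perm.inv_def]
  have hmaps : Set.MapsTo (((canE m i).permCongr.symm) τ)
      (Set.range Sum.inl) (Set.range Sum.inl) := by
    rintro p ⟨x, rfl⟩
    have h1 : ((canE m i).permCongr.symm τ) (Sum.inl x) =
        (canE m i).symm (τ (canE m i (Sum.inl x))) := rfl
    have h2 : τ (canE m i (Sum.inl x)) = σ⁻¹ (g (canE m i (Sum.inl x))) := rfl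
    have hnot : g (canE m i (Sum.inl x)) ∉ Sg i g := by
      rw [mem_Sg, ← Equiv.Perm.mul_apply, inv_mul_cancel, Equiv.Perm.one_apply, Equiv.symm_apply_apply]
      simp
    rw [Set.mem_range]
    have hleft := splitEquiv_symm_isLeft (card_compl_eq (Sg_card i g)) (Sg_card i g) hnot
    rcases hx' : ((splitEquiv (Sg i g) (card_compl_eq (Sg_card i g))
        (Sg_card i g)).symm (g (canE m i (Sum.inl x)))) with x' | y'
    · exact ⟨x', by rw [h1, h2, hσinv, hx', Equiv.symm_apply_apply]⟩
    · rw [hx'] at hleft; exact absurd hleft (by simp)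
  obtain ⟨⟨h₁, h₂⟩, hc⟩ := Equiv.Perm.mem_sumCongrHom_range_of_perm_mapsTo_inl hmaps
  refine ⟨(h₁, h₂), ?_⟩
  have hτ' : permPairHom (canE m i) (h₁, h₂) = τ := by
    ext j
    have := congrArg (fun (p : Equiv.Perm (Fin (m - (i : ℕ)) ⊕ Fin (i : ℕ))) =>
      canE m i (p ((canE m i).symm j))) hc
    have h3 := by
      simpa [permPairHom, Equiv.Perm.sumCongrHom, Equiv.permCongr, Equiv.equivCongr] using this
    exact congrArg Fin.val h3
  rw [hτ', hτ, mul_inv_cancel_left]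

theorem mk_rel (i : Fin (m + 1)) (σ : Equiv.Perm (Fin m))
    (h : Equiv.Perm (Fin (m - (i : ℕ))) × Equiv.Perm (Fin (i : ℕ))) (c : k)
    (w : (⨂[k] _x : Fin (m - (i : ℕ)), E₀) ⊗[k] (⨂[k] _x : Fin ((i : ℕ)), E₁)) :
    (Submodule.Quotient.mk (MonoidAlgebra.single (σ * permPairHom (canE m i) h) c ⊗ₜ[k] w) :
        IndSummand k E₀ E₁ m i) =
      Submodule.Quotient.mk (MonoidAlgebra.single σ c ⊗ₜ[k]
        (pairPermRep k (m - (i : ℕ)) (i : ℕ) E₀ E₁ h w)) := by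
  rw [Submodule.Quotient.eq]
  refine Submodule.subset_span ⟨MonoidAlgebra.single σ c, h, w, ?_⟩
  have hmul : (MonoidAlgebra.single σ c : MonoidAlgebra k (Equiv.Perm (Fin m))) *
      MonoidAlgebra.of k _ (permPairHom (canE m i) h) =
      MonoidAlgebra.single (σ * permPairHom (canE m i) h) c := by
    simp [MonoidAlgebra.of_apply, MonoidAlgebra.single_mul_single]
  rw [hmul]

/-- Generalized summand inclusion. -/
noncomputable def toSummandG (i : Fin (m + 1)) (x : MonoidAlgebra k (Equiv.Perm (Fin m))) :
    ((⨂[k] _x : Fin (m - (i : ℕ)), E₀) ⊗[k] (⨂[k] _x : Fin ((i : ℕ)), E₁)) →ₗ[k]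
      (⨁ j : Fin (m + 1), IndSummand k E₀ E₁ m j) :=
  (DirectSum.lof k (Fin (m + 1)) (IndSummand k E₀ E₁ m) i).comp
    ((Submodule.mkQ _ :
        MonoidAlgebra k (Equiv.Perm (Fin m)) ⊗[k]
          ((⨂[k] _x : Fin (m - (i : ℕ)), E₀) ⊗[k] (⨂[k] _x : Fin ((i : ℕ)), E₁)) →ₗ[k]
          IndSummand k E₀ E₁ m i).comp
      (TensorProduct.mk k (MonoidAlgebra k (Equiv.Perm (Fin m)))
        ((⨂[k] _x : Fin (m - (i : ℕ)), E₀) ⊗[k] (⨂[k] _x : Fin ((i : ℕ)), E₁)) x))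

theorem toSummandG_apply (i : Fin (m + 1)) (x : MonoidAlgebra k (Equiv.Perm (Fin m)))
    (w : (⨂[k] _x : Fin (m - (i : ℕ)), E₀) ⊗[k] (⨂[k] _x : Fin ((i : ℕ)), E₁)) :
    toSummandG k E₀ E₁ m i x w =
      DirectSum.lof k (Fin (m + 1)) (IndSummand k E₀ E₁ m) i
        (Submodule.Quotient.mk (x ⊗ₜ[k] w)) := rfl

theorem pairPermRep_tprod (i : Fin (m + 1))
    (h : Equiv.Perm (Fin (m - (i : ℕ))) × Equiv.Perm (Fin (i : ℕ)))
    (u : Fin (m - (i : ℕ)) → E₀) (t : Fin (i : ℕ) → E₁) :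
    pairPermRep k (m - (i : ℕ)) (i : ℕ) E₀ E₁ h
        ((PiTensorProduct.tprod k) u ⊗ₜ[k] (PiTensorProduct.tprod k) t) =
      (PiTensorProduct.tprod k) (fun x => u (h.1.symm x)) ⊗ₜ[k]
        (PiTensorProduct.tprod k) (fun y => t (h.2.symm y)) := by
  simp [pairPermRep]

set_option maxHeartbeats 2000000 in
theorem Phi0_gen (i : Fin (m + 1)) (g : Equiv.Perm (Fin m)) :
    Phi0 k E₀ E₁ m ∘ₗ Lact k E₀ E₁ m g ∘ₗ inclV k E₀ E₁ m i =
      toSummandG k E₀ E₁ m i (MonoidAlgebra.single g 1) := by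
  ext u t
  simp only [LinearMap.compMultilinearMap_apply, TensorProduct.AlgebraTensorModule.curry_apply,
    TensorProduct.curry_apply, LinearMap.coe_restrictScalars, LinearMap.coe_comp,
    Function.comp_apply]
  rw [inclV_tprod, Lact_tprod, toSummandG_apply]
  set P : Fin m → E₀ × E₁ := fun j => Sum.elim (fun x => ((u x, 0) : E₀ × E₁))
    (fun y => ((0, t y) : E₀ × E₁)) ((canE m i).symm (g⁻¹ j)) with hP
  have hPhi : Phi0 k E₀ E₁ m ((PiTensorProduct.tprod k) P) = mu k E₀ E₁ m P := by
    rw [Phi0, PiTensorProduct.lift.tprod]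
  rw [hPhi, mu, MultilinearMap.sum_apply]
  have hvanish : ∀ S ∈ (Finset.univ : Finset (Finset (Fin m))), S ≠ Sg i g →
      termMl k E₀ E₁ m ⟨S.card, card_le S⟩ S rfl P = 0 := by
    intro S _ hne
    have hS' : S.card = ((⟨S.card, card_le S⟩ : Fin (m + 1)) : ℕ) := rfl
    rw [termMl_apply]
    by_cases hsub : S ⊆ Sg i g
    · have hns : ¬ Sg i g ⊆ S := fun h' => hne (Finset.Subset.antisymm hsub h')
      obtain ⟨j, hjSg, hjS⟩ := Finset.not_subset.mp hns
      have hL := splitEquiv_symm_isLeft (S := S) (card_compl_eq hS') hS' hjS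
      rcases hx : (splitEquiv S (card_compl_eq hS') hS').symm j with x | y
      · have hj : splitEquiv S (card_compl_eq hS') hS' (Sum.inl x) = j := by
          rw [← hx, Equiv.apply_symm_apply]
        have hz : (P (splitEquiv S (card_compl_eq hS') hS' (Sum.inl x))).1 = 0 := by
          rw [hj, hP]
          rcases hyy : (canE m i).symm (g⁻¹ j) with x' | y'
          · rw [mem_Sg, hyy] at hjSg; exact absurd hjSg (by simp)
          · simp only [hyy, Sum.elim_inr]
        rw [MultilinearMap.map_coord_zero (PiTensorProduct.tprod k) x hz,
          TensorProduct.zero_tmul, TensorProduct.tmul_zero]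
        simp
      · rw [hx] at hL; exact absurd hL (by simp)
    · obtain ⟨j, hjS, hjSg⟩ := Finset.not_subset.mp hsub
      have hR := splitEquiv_symm_isRight (S := S) (card_compl_eq hS') hS' hjS
      rcases hx : (splitEquiv S (card_compl_eq hS') hS').symm j with x | y
      · rw [hx] at hR; exact absurd hR (by simp)
      · have hj : splitEquiv S (card_compl_eq hS') hS' (Sum.inr y) = j := by
          rw [← hx, Equiv.apply_symm_apply]
        have hz : (P (splitEquiv S (card_compl_eq hS') hS' (Sum.inr y))).2 = 0 := by
          rw [hj, hP]
          rcases hyy : (canE m i).symm (g⁻¹ j) with x' | y'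
          · simp only [hyy, Sum.elim_inl]
          · rw [mem_Sg, hyy] at hjSg; exact absurd (by simp) hjSg
        rw [MultilinearMap.map_coord_zero (PiTensorProduct.tprod k) y hz,
          TensorProduct.tmul_zero, TensorProduct.tmul_zero]
        simp
  rw [Finset.sum_eq_single_of_mem (Sg i g) (Finset.mem_univ _) hvanish]
  rw [termMl_congr k E₀ E₁ m i (Sg i g) (Sg_card i g), termMl_apply]
  obtain ⟨h, hg⟩ := exists_decomp i g
  have hgpinv : ∀ j, g⁻¹ j = (permPairHom (canE m i) h)⁻¹
      ((sigmaS i (Sg i g) (Sg_card i g))⁻¹ j) := by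
    intro j
    conv_lhs => rw [hg]
    simp [mul_inv_rev, Equiv.Perm.mul_apply]
  have hkey1 : ∀ x : Fin (m - (i : ℕ)),
      (canE m i).symm (g⁻¹ (splitEquiv (Sg i g) (card_compl_eq (Sg_card i g))
        (Sg_card i g) (Sum.inl x))) = Sum.inl (h.1.symm x) := by
    intro x
    rw [hgpinv, sigmaS_inv_apply, ← map_inv]
    show (canE m i).symm ((canE m i) ((Equiv.sumCongr (h.1⁻¹) (h.2⁻¹))
      ((canE m i).symm ((canE m i) (Sum.inl x))))) = _
    rw [Equiv.symm_apply_apply, Equiv.symm_apply_apply]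
    rfl
  have hkey2 : ∀ y : Fin (i : ℕ),
      (canE m i).symm (g⁻¹ (splitEquiv (Sg i g) (card_compl_eq (Sg_card i g))
        (Sg_card i g) (Sum.inr y))) = Sum.inr (h.2.symm y) := by
    intro y
    rw [hgpinv, sigmaS_inv_apply, ← map_inv]
    show (canE m i).symm ((canE m i) ((Equiv.sumCongr (h.1⁻¹) (h.2⁻¹))
      ((canE m i).symm ((canE m i) (Sum.inr y))))) = _
    rw [Equiv.symm_apply_apply, Equiv.symm_apply_apply]
    rfl
  have hu : (fun x => (P (splitEquiv (Sg i g) (card_compl_eq (Sg_card i g))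
      (Sg_card i g) (Sum.inl x))).1) = fun x => u (h.1.symm x) := by
    funext x
    rw [hP]
    simp only []
    rw [hkey1 x]
    rfl
  have ht : (fun y => (P (splitEquiv (Sg i g) (card_compl_eq (Sg_card i g))
      (Sg_card i g) (Sum.inr y))).2) = fun y => t (h.2.symm y) := by
    funext y
    rw [hP]
    simp only []
    rw [hkey2 y]
    rfl
  rw [hu, ht, hg, mk_rel, pairPermRep_tprod, ← hg]

theorem Phi0_PsiTot : Phi0 k E₀ E₁ m ∘ₗ PsiTot k E₀ E₁ m = LinearMap.id := by
  refine DirectSum.linearMap_ext k fun i => ?_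
  refine @Submodule.linearMap_qext k _ _ _ _
    (indRel k (permPairHom (canE m i)) _ (pairPermRep k (m - (i : ℕ)) (i : ℕ) E₀ E₁))
    k (⨁ j : Fin (m + 1), IndSummand k E₀ E₁ m j) _
    (@DirectSum.instAddCommGroup (Fin (m + 1)) (fun j => IndSummand k E₀ E₁ m j)
      fun j => Submodule.Quotient.addCommGroup _) _ (RingHom.id k) _ _ ?_
  ext g u t
  simp only [LinearMap.compMultilinearMap_apply, TensorProduct.AlgebraTensorModule.curry_apply,
    TensorProduct.curry_apply, LinearMap.coe_restrictScalars, LinearMap.coe_comp,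
    Function.comp_apply, MonoidAlgebra.lsingle_apply, Submodule.mkQ_apply, LinearMap.id_coe,
    id_eq]
  rw [PsiTot_lof, Psi_mk, psi_single, one_smul]
  have := LinearMap.congr_fun (Phi0_gen k E₀ E₁ m i g)
    ((PiTensorProduct.tprod k) u ⊗ₜ[k] (PiTensorProduct.tprod k) t)
  simp only [LinearMap.coe_comp, Function.comp_apply] at this
  rw [this, toSummandG_apply]

end Aux

theorem statement6 :
    ∃ Φ : (⨂[k] _j : Fin m, (E₀ × E₁)) ≃ₗ[k] ⨁ i : Fin (m + 1), IndSummand k E₀ E₁ m i,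
      ∀ (σ : Equiv.Perm (Fin m)) (x : ⨂[k] _j : Fin m, (E₀ × E₁)),
        Φ (PiTensorProduct.reindex k (fun _ : Fin m => E₀ × E₁) σ x) =
          sumIndAction k E₀ E₁ m σ (Φ x) := by
  refine ⟨LinearEquiv.ofLinear (Phi0 k E₀ E₁ m) (PsiTot k E₀ E₁ m)
    (Phi0_PsiTot k E₀ E₁ m) (PsiTot_Phi0 k E₀ E₁ m), fun σ x => ?_⟩
  have hinj : Function.Injective (PsiTot k E₀ E₁ m) := fun a b hab => by
    have h1 := LinearMap.congr_fun (Phi0_PsiTot k E₀ E₁ m) a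
    have h2 := LinearMap.congr_fun (Phi0_PsiTot k E₀ E₁ m) b
    simp only [LinearMap.coe_comp, Function.comp_apply, LinearMap.id_coe, id_eq] at h1 h2
    rw [← h1, ← h2, hab]
  apply hinj
  rw [PsiTot_equivariant]
  show PsiTot k E₀ E₁ m (Phi0 k E₀ E₁ m _) = Lact k E₀ E₁ m σ (PsiTot k E₀ E₁ m (Phi0 k E₀ E₁ m x))
  have hid : ∀ y, PsiTot k E₀ E₁ m (Phi0 k E₀ E₁ m y) = y := fun y => by
    have := LinearMap.congr_fun (PsiTot_Phi0 k E₀ E₁ m) y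
    simpa using this
  rw [hid, hid]
  rfl
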